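/- Let A : D(A) ⊆ E → F be a closed linear operator between real Banach spaces with dense domain D(A), and let A* : D(A*) ⊆ F* → E* be its adjoint. Then the image A*(D(A*)) is closed in E* if and only if there exists a constant C > 0 such that for every f ∈ A(D(A)) there exists e ∈ D(A) with A e = f and ‖e‖_E ≤ C ‖f‖_F. -/

import Mathlib

namespace Stmt3

open Filter Topology
open scoped Classical

variable {E F : Type*} [NormedAddCommGroup E] [NormedSpace ℝ E]
  [NormedAddCommGroup F] [NormedSpace ℝ F]

/-- `g ∈ E*` is the value `A* f*` of the adjoint of `A` at `f* ∈ F*`: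
`g` is the (necessarily unique, by density of `D`) continuous extension to `E` of the
functional `e ↦ f* (A e)` on `D`.  The existence of such a continuous extension is
equivalent to the defining condition `|f*(A e)| ≤ C ‖e‖` of `D(A*)`. -/
def IsAdjointPair (D : Submodule ℝ E) (A : D →ₗ[ℝ] F)
    (fstar : F →L[ℝ] ℝ) (g : E →L[ℝ] ℝ) : Prop :=
  ∀ e : D, g e = fstar (A e)

/-- From approximate controlled solvability on a submodule `Z` into which `T` maps,
deduce exact controlled solvability, by completeness of the domain. -/
theorem exact_of_approx {X F : Type*} [NormedAddCommGroup X] [NormedSpace ℝ X]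
    [NormedAddCommGroup F] [NormedSpace ℝ F] [CompleteSpace X]
    (T : X →L[ℝ] F) (Z : Submodule ℝ F) (hTZ : ∀ x : X, T x ∈ Z) (M : ℝ) (hM : 0 < M)
    (happrox : ∀ f ∈ Z, ∀ δ : ℝ, 0 < δ → ∃ x : X, ‖x‖ ≤ M * ‖f‖ ∧ ‖T x - f‖ ≤ δ) :
    ∀ f ∈ Z, ∃ x : X, T x = f ∧ ‖x‖ ≤ 2 * M * ‖f‖ := by
  intro f hfZ
  by_cases hf0 : f = 0
  · exact ⟨0, by simp [hf0], by simp [hf0, le_of_lt hM]⟩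
  have hfpos : 0 < ‖f‖ := norm_pos_iff.mpr hf0
  -- choice function for one approximation step
  set step : F → ℕ → X := fun f' n =>
    if h : f' ∈ Z then (happrox f' h ((2⁻¹ : ℝ) ^ (n + 1) * ‖f‖) (by positivity)).choose
    else 0 with hstepdef
  have hstep : ∀ f' (h : f' ∈ Z) (n : ℕ),
      ‖step f' n‖ ≤ M * ‖f'‖ ∧ ‖T (step f' n) - f'‖ ≤ (2⁻¹ : ℝ) ^ (n + 1) * ‖f‖ := by
    intro f' h n
    simp only [hstepdef, dif_pos h]
    exact (happrox f' h ((2⁻¹ : ℝ) ^ (n + 1) * ‖f‖) (by positivity)).choose_spec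
  -- sequence of residuals
  set r : ℕ → F := fun n => Nat.rec f (fun n rn => rn - T (step rn n)) n with hrdef
  have hr0 : r 0 = f := rfl
  have hrsucc : ∀ n, r (n + 1) = r n - T (step (r n) n) := fun n => rfl
  set x : ℕ → X := fun n => step (r n) n with hxdef
  have hr : ∀ n, r n ∈ Z ∧ ‖r n‖ ≤ (2⁻¹ : ℝ) ^ n * ‖f‖ := by
    intro n
    induction n with
    | zero => exact ⟨hfZ, by simp [hr0]⟩
    | succ n ih =>
      constructor
      · rw [hrsucc]; exact Z.sub_mem ih.1 (hTZ _)
      · rw [hrsucc, norm_sub_rev]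
        exact (hstep (r n) ih.1 n).2
  have hx : ∀ n, ‖x n‖ ≤ M * ‖f‖ * (2⁻¹ : ℝ) ^ n := by
    intro n
    calc ‖x n‖ ≤ M * ‖r n‖ := (hstep (r n) (hr n).1 n).1
    _ ≤ M * ((2⁻¹ : ℝ) ^ n * ‖f‖) := by
        exact mul_le_mul_of_nonneg_left (hr n).2 (le_of_lt hM)
    _ = M * ‖f‖ * (2⁻¹ : ℝ) ^ n := by ring
  have hgeom : Summable fun n : ℕ => M * ‖f‖ * (2⁻¹ : ℝ) ^ n :=
    (summable_geometric_of_lt_one (by norm_num) (by norm_num)).mul_left _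
  have hsum : Summable x := Summable.of_norm_bounded hgeom hx
  have hnormsum : Summable fun n => ‖x n‖ :=
    Summable.of_nonneg_of_le (fun _ => norm_nonneg _) hx hgeom
  refine ⟨∑' n, x n, ?_, ?_⟩
  · -- T (∑ x n) = f
    have h1 : HasSum (fun n => T (x n)) (T (∑' n, x n)) := hsum.hasSum.mapL T
    have h2 : Tendsto (fun n => ∑ k ∈ Finset.range n, T (x k)) atTop (nhds (T (∑' n, x n))) :=
      h1.tendsto_sum_nat
    have hpartial : ∀ n, ∑ k ∈ Finset.range n, T (x k) = f - r n := by
      intro n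
      induction n with
      | zero => simp [hr0]
      | succ n ih =>
        rw [Finset.sum_range_succ, ih, hrsucc]
        abel
    have hrlim : Tendsto r atTop (nhds 0) := by
      apply squeeze_zero_norm (fun n => (hr n).2)
      have := (tendsto_pow_atTop_nhds_zero_of_lt_one (by norm_num : (0:ℝ) ≤ 2⁻¹)
        (by norm_num)).mul_const ‖f‖
      simpa using this
    have h3 : Tendsto (fun n => ∑ k ∈ Finset.range n, T (x k)) atTop (nhds f) := by
      simp only [hpartial]
      simpa using (tendsto_const_nhds.sub hrlim)
    exact tendsto_nhds_unique h2 h3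
  · calc ‖∑' n, x n‖ ≤ ∑' n, ‖x n‖ := norm_tsum_le_tsum_norm hnormsum
    _ ≤ ∑' n : ℕ, M * ‖f‖ * (2⁻¹ : ℝ) ^ n := Summable.tsum_le_tsum hx hnormsum hgeom
    _ = M * ‖f‖ * (1 - 2⁻¹)⁻¹ := by
        rw [tsum_mul_left, tsum_geometric_of_lt_one (by norm_num) (by norm_num)]
    _ = 2 * M * ‖f‖ := by norm_num; ring

/-- Bounded solvability implies that the adjoint's range is closed. -/
theorem rev_dir (D : Submodule ℝ E) (A : D →ₗ[ℝ] F) (C : ℝ)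
    (hsolv : ∀ f ∈ Set.range A, ∃ e : D, A e = f ∧ ‖(e : E)‖ ≤ C * ‖f‖) :
    IsClosed {g : E →L[ℝ] ℝ | ∃ fstar : F →L[ℝ] ℝ, IsAdjointPair D A fstar g} := by
  apply isClosed_of_closure_subset
  intro g hg
  -- g vanishes on elements of D killed by A
  have hker : ∀ e : D, A e = 0 → g e = 0 := by
    intro e he
    have hcl : IsClosed {h : E →L[ℝ] ℝ | h e = 0} :=
      isClosed_eq (ContinuousLinearMap.apply ℝ ℝ (e : E)).continuous continuous_const
    have hsub2 : {g' : E →L[ℝ] ℝ | ∃ fstar, IsAdjointPair D A fstar g'}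
        ⊆ {h : E →L[ℝ] ℝ | h e = 0} := by
      rintro g' ⟨fstar, hpair⟩
      simp only [Set.mem_setOf_eq, hpair e, he, map_zero]
    exact closure_minimal hsub2 hcl hg
  -- a bounded right inverse (section) of A
  set sec : F → D := fun f => if h : f ∈ Set.range A then (hsolv f h).choose else 0 with hsecdef
  have hsec : ∀ f (h : f ∈ Set.range A), A (sec f) = f ∧ ‖(sec f : E)‖ ≤ C * ‖f‖ := by
    intro f h; simp only [hsecdef, dif_pos h]; exact (hsolv f h).choose_spec
  have hgsub : ∀ a b : D, A a = A b → g a = g b := by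
    intro a b hab
    have h1 : A (a - b) = 0 := by rw [map_sub, hab, sub_self]
    have h2 := hker _ h1
    rw [Submodule.coe_sub, map_sub] at h2
    linarith
  -- the linear functional on the range of A
  set φ₀ : LinearMap.range A →ₗ[ℝ] ℝ :=
    { toFun := fun f => g (sec f.val)
      map_add' := by
        rintro ⟨f₁, hf₁⟩ ⟨f₂, hf₂⟩
        have h12 : f₁ + f₂ ∈ Set.range A := by
          obtain ⟨e₁, rfl⟩ := hf₁; obtain ⟨e₂, rfl⟩ := hf₂
          exact ⟨e₁ + e₂, map_add A e₁ e₂⟩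
        have := hgsub (sec (f₁ + f₂)) (sec f₁ + sec f₂) (by
          rw [map_add, (hsec _ h12).1, (hsec _ hf₁).1, (hsec _ hf₂).1])
        simp only [AddMemClass.mk_add_mk]
        rw [this]
        simp [map_add]
      map_smul' := by
        rintro c ⟨f₁, hf₁⟩
        have hc : c • f₁ ∈ Set.range A := by
          obtain ⟨e₁, rfl⟩ := hf₁; exact ⟨c • e₁, map_smul A c e₁⟩
        have := hgsub (sec (c • f₁)) (c • sec f₁) (by
          rw [map_smul, (hsec _ hc).1, (hsec _ hf₁).1])
        simp only [SetLike.mk_smul_mk]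
        rw [this]
        simp } with hφ₀def
  have hφ₀bound : ∀ f : LinearMap.range A, ‖φ₀ f‖ ≤ (‖g‖ * C) * ‖f‖ := by
    rintro ⟨f, hf⟩
    have h1 : ‖g ((sec f : D) : E)‖ ≤ ‖g‖ * ‖((sec f : D) : E)‖ := g.le_opNorm _
    have h2 := (hsec f hf).2
    have h3 : ‖g ((sec f : D) : E)‖ ≤ ‖g‖ * (C * ‖f‖) :=
      h1.trans (mul_le_mul_of_nonneg_left h2 (norm_nonneg g))
    calc ‖φ₀ ⟨f, hf⟩‖ = ‖g ((sec f : D) : E)‖ := rfl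
    _ ≤ ‖g‖ * (C * ‖f‖) := h3
    _ = (‖g‖ * C) * ‖(⟨f, hf⟩ : LinearMap.range A)‖ := by rw [mul_assoc]; rfl
  set φ : LinearMap.range A →L[ℝ] ℝ := LinearMap.mkContinuous φ₀ (‖g‖ * C) hφ₀bound
  obtain ⟨fstar, hext, -⟩ := exists_extension_norm_eq (LinearMap.range A) φ
  refine ⟨fstar, fun e => ?_⟩
  have h4 : fstar (A e) = φ ⟨A e, ⟨e, rfl⟩⟩ := hext ⟨A e, ⟨e, rfl⟩⟩
  have h5 : φ ⟨A e, ⟨e, rfl⟩⟩ = g (sec (A e)) := rfl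
  have h6 : g (sec (A e)) = g e := hgsub _ _ ((hsec (A e) ⟨e, rfl⟩).1)
  rw [h4, h5, h6]


/-- The range of the adjoint, as a submodule of the dual of `E`. -/
noncomputable def adjRange (D : Submodule ℝ E) (A : D →ₗ[ℝ] F) : Submodule ℝ (E →L[ℝ] ℝ) where
  carrier := {g : E →L[ℝ] ℝ | ∃ fstar : F →L[ℝ] ℝ, IsAdjointPair D A fstar g}
  add_mem' := by
    rintro g₁ g₂ ⟨h₁, hp₁⟩ ⟨h₂, hp₂⟩
    exact ⟨h₁ + h₂, fun e => by
      simp [ContinuousLinearMap.add_apply, hp₁ e, hp₂ e]⟩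
  zero_mem' := ⟨0, fun e => by simp⟩
  smul_mem' := by
    rintro c g₁ ⟨h₁, hp₁⟩
    exact ⟨c • h₁, fun e => by
      simp [ContinuousLinearMap.smul_apply, hp₁ e]⟩

/-- The "reversed graph" of the adjoint, as a submodule of the product of duals. -/
noncomputable def adjGraph (D : Submodule ℝ E) (A : D →ₗ[ℝ] F) :
    Submodule ℝ ((E →L[ℝ] ℝ) × (F →L[ℝ] ℝ)) where
  carrier := {p | IsAdjointPair D A p.2 p.1}
  add_mem' := by
    rintro p₁ p₂ hp₁ hp₂ e
    simp [ContinuousLinearMap.add_apply, hp₁ e, hp₂ e]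
  zero_mem' := fun e => by simp
  smul_mem' := by
    rintro c p hp e
    simp [ContinuousLinearMap.smul_apply, hp e]


/-- Open mapping theorem applied to the first-coordinate projection of a closed
submodule `W` of a product onto a closed submodule `S`. -/
theorem preimage_bound {G H : Type*} [NormedAddCommGroup G] [NormedSpace ℝ G]
    [NormedAddCommGroup H] [NormedSpace ℝ H] [CompleteSpace G] [CompleteSpace H]
    (W : Submodule ℝ (G × H)) (S : Submodule ℝ G)
    (hWc : IsClosed (W : Set (G × H))) (hSc : IsClosed (S : Set G))
    (hproj : ∀ p : G × H, p ∈ W → p.1 ∈ S)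
    (hsurj : ∀ g ∈ S, ∃ p ∈ W, p.1 = g) :
    ∃ C : ℝ, 0 < C ∧ ∀ g ∈ S, ∃ p ∈ W, p.1 = g ∧ ‖p.2‖ ≤ C * ‖g‖ := by
  haveI : CompleteSpace W := hWc.completeSpace_coe
  haveI : CompleteSpace S := hSc.completeSpace_coe
  set π : W →L[ℝ] S := ContinuousLinearMap.codRestrict
    ((ContinuousLinearMap.fst ℝ G H).comp W.subtypeL) S
    (fun w => hproj w.val w.prop) with hπdef
  have hπsurj : Function.Surjective π := by
    rintro ⟨g, hg⟩
    obtain ⟨p, hpW, hp1⟩ := hsurj g hg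
    exact ⟨⟨p, hpW⟩, Subtype.ext hp1⟩
  obtain ⟨C, hC, hpre⟩ := π.exists_preimage_norm_le hπsurj
  refine ⟨C, hC, fun g hg => ?_⟩
  obtain ⟨w, hw, hwnorm⟩ := hpre ⟨g, hg⟩
  refine ⟨w.val, w.prop, congrArg Subtype.val hw, ?_⟩
  calc ‖w.val.2‖ ≤ ‖w.val‖ := norm_snd_le w.val
  _ = ‖w‖ := rfl
  _ ≤ C * ‖(⟨g, hg⟩ : S)‖ := hwnorm
  _ = C * ‖g‖ := rfl

set_option maxHeartbeats 1000000 in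
theorem fwd_dir [CompleteSpace E] [CompleteSpace F]
    (D : Submodule ℝ E) (A : D →ₗ[ℝ] F)
    (hclosed : IsClosed {p : E × F | ∃ e : D, (e : E) = p.1 ∧ A e = p.2})
    (hS : IsClosed {g : E →L[ℝ] ℝ | ∃ fstar : F →L[ℝ] ℝ, IsAdjointPair D A fstar g}) :
    ∃ C : ℝ, 0 < C ∧ ∀ f ∈ Set.range A, ∃ e : D, A e = f ∧ ‖(e : E)‖ ≤ C * ‖f‖ := by
  have hSclosed : IsClosed ((adjRange D A : Submodule ℝ (E →L[ℝ] ℝ)) : Set (E →L[ℝ] ℝ)) := hS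
  haveI : CompleteSpace (adjRange D A) := hSclosed.completeSpace_coe
  have hWclosed : IsClosed ((adjGraph D A : Submodule ℝ _) : Set ((E →L[ℝ] ℝ) × (F →L[ℝ] ℝ))) := by
    have : ((adjGraph D A : Submodule ℝ _) : Set ((E →L[ℝ] ℝ) × (F →L[ℝ] ℝ)))
        = ⋂ e : D, {p : (E →L[ℝ] ℝ) × (F →L[ℝ] ℝ) | p.1 e = p.2 (A e)} := by
      ext p; simp [Set.mem_iInter, adjGraph, IsAdjointPair]
    rw [this]
    exact isClosed_iInter fun e => isClosed_eq
      ((ContinuousLinearMap.apply ℝ ℝ ((e : D) : E)).continuous.comp continuous_fst)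
      ((ContinuousLinearMap.apply ℝ ℝ (A e)).continuous.comp continuous_snd)
  obtain ⟨C₁, hC₁, hpre⟩ := preimage_bound (adjGraph D A) (adjRange D A) hWclosed hSclosed
    (fun p hp => ⟨p.2, hp⟩) (fun g hg => by
      obtain ⟨h, hp⟩ := hg
      exact ⟨(g, h), hp, rfl⟩)
  -- quantitative adjoint solvability
  have hW : ∀ g : E →L[ℝ] ℝ, (∃ fstar, IsAdjointPair D A fstar g) →
      ∃ h : F →L[ℝ] ℝ, IsAdjointPair D A h g ∧ ‖h‖ ≤ C₁ * ‖g‖ := by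
    intro g hg
    obtain ⟨p, hpW, hp1, hpnorm⟩ := hpre g hg
    refine ⟨p.2, fun e => ?_, hpnorm⟩
    rw [← hp1]
    exact hpW e
  -- the graph of A as a closed submodule of E × F
  set G' : Submodule ℝ (E × F) := LinearMap.range (D.subtype.prod A) with hG'def
  have hG'set : (G' : Set (E × F)) = {p : E × F | ∃ e : D, (e : E) = p.1 ∧ A e = p.2} := by
    ext p
    simp [hG'def, LinearMap.mem_range, LinearMap.prod_apply, Prod.ext_iff,
      Submodule.coe_subtype, LinearMap.coe_prod, Pi.prod]
  have hG'closed : IsClosed (G' : Set (E × F)) := hG'set ▸ hclosed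
  haveI : CompleteSpace G' := hG'closed.completeSpace_coe
  set T : G' →L[ℝ] F := (ContinuousLinearMap.snd ℝ E F).comp G'.subtypeL with hTdef
  set Z : Submodule ℝ F := (LinearMap.range A).topologicalClosure with hZdef
  have hTmem : ∀ x : G', T x ∈ Set.range A := by
    rintro ⟨x, hx⟩
    obtain ⟨e, he⟩ := hx
    exact ⟨e, congrArg Prod.snd he⟩
  have hTZ : ∀ x : G', T x ∈ Z := fun x =>
    Submodule.le_topologicalClosure _ (hTmem x)
  set M : ℝ := 1 + C₁ with hMdef
  have hM : 0 < M := by positivity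
  -- the key dual inequality
  have key : ∀ (φ : F →L[ℝ] ℝ) (f : F), f ∈ Z → |φ f| ≤ M * ‖φ.comp T‖ * ‖f‖ := by
    intro φ f hf
    set t : ℝ := ‖φ.comp T‖ with htdef
    have ht : 0 ≤ t := htdef ▸ ContinuousLinearMap.opNorm_nonneg _
    obtain ⟨Φ, hΦ, hΦnorm⟩ := exists_extension_norm_eq G' (φ.comp T)
    set g₀ : E →L[ℝ] ℝ := Φ.comp (ContinuousLinearMap.inl ℝ E F) with hg₀def
    set h₀ : F →L[ℝ] ℝ := Φ.comp (ContinuousLinearMap.inr ℝ E F) with hh₀def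
    have hsplit : ∀ e : D, g₀ e + h₀ (A e) = φ (A e) := by
      intro e
      have hx : ((e : E), A e) ∈ G' := ⟨e, rfl⟩
      have h1 : Φ ((e : E), A e) = φ (A e) := hΦ ⟨((e : E), A e), hx⟩
      have h2 : ((e : E), A e) = ((e : E), (0 : F)) + ((0 : E), A e) := by simp
      calc g₀ e + h₀ (A e) = Φ ((e : E), (0:F)) + Φ ((0:E), A e) := rfl
      _ = Φ ((e : E), A e) := by rw [← map_add, ← h2]
      _ = φ (A e) := h1
    have hg₀ : ‖g₀‖ ≤ t := by
      apply ContinuousLinearMap.opNorm_le_bound _ ht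
      intro v
      calc ‖g₀ v‖ = ‖Φ (v, (0:F))‖ := rfl
      _ ≤ ‖Φ‖ * ‖(v, (0:F))‖ := Φ.le_opNorm _
      _ = t * ‖v‖ := by rw [hΦnorm, Prod.norm_def]; simp [norm_nonneg, htdef]
    have hh₀ : ‖h₀‖ ≤ t := by
      apply ContinuousLinearMap.opNorm_le_bound _ ht
      intro v
      calc ‖h₀ v‖ = ‖Φ ((0:E), v)‖ := rfl
      _ ≤ ‖Φ‖ * ‖((0:E), v)‖ := Φ.le_opNorm _
      _ = t * ‖v‖ := by rw [hΦnorm, Prod.norm_def]; simp [norm_nonneg, htdef]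
    have hpair0 : ∃ fstar, IsAdjointPair D A fstar g₀ :=
      ⟨φ - h₀, fun e => by
        have := hsplit e
        simp only [ContinuousLinearMap.sub_apply]
        linarith⟩
    obtain ⟨h₁, hp₁, hh₁⟩ := hW g₀ hpair0
    have hh₁' : ‖h₁‖ ≤ C₁ * t := hh₁.trans (mul_le_mul_of_nonneg_left hg₀ (le_of_lt hC₁))
    -- on the range of A, φ = h₀ + h₁; extend the estimate to the closure Z
    have hclosedset : IsClosed {f : F | |φ f| ≤ M * t * ‖f‖} :=
      isClosed_le (continuous_abs.comp φ.continuous) (continuous_const.mul continuous_norm)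
    have hrange : Set.range A ⊆ {f : F | |φ f| ≤ M * t * ‖f‖} := by
      rintro f ⟨e, rfl⟩
      have h1 : φ (A e) = h₀ (A e) + h₁ (A e) := by
        have := hsplit e
        have := hp₁ e
        linarith
      calc |φ (A e)| = |h₀ (A e) + h₁ (A e)| := by rw [h1]
      _ ≤ |h₀ (A e)| + |h₁ (A e)| := abs_add_le _ _
      _ ≤ ‖h₀‖ * ‖A e‖ + ‖h₁‖ * ‖A e‖ := add_le_add (h₀.le_opNorm _) (h₁.le_opNorm _)
      _ ≤ t * ‖A e‖ + C₁ * t * ‖A e‖ := by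
          refine add_le_add (mul_le_mul_of_nonneg_right hh₀ (norm_nonneg _))
            (mul_le_mul_of_nonneg_right hh₁' (norm_nonneg _))
      _ = M * t * ‖A e‖ := by ring
    have hZsub : (Z : Set F) ⊆ {f : F | |φ f| ≤ M * t * ‖f‖} := by
      rw [hZdef, Submodule.topologicalClosure_coe]
      refine closure_minimal ?_ hclosedset
      intro f' hf'
      obtain ⟨e, rfl⟩ := hf'
      exact hrange ⟨e, rfl⟩
    exact hZsub hf
  -- approximate solvability via Hahn-Banach separation
  have happrox : ∀ f ∈ Z, ∀ δ : ℝ, 0 < δ → ∃ x : G', ‖x‖ ≤ M * ‖f‖ ∧ ‖T x - f‖ ≤ δ := by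
    intro f hf δ hδ
    set K : Set F := closure (T '' Metric.closedBall 0 (M * ‖f‖)) with hKdef
    have hfK : f ∈ K := by
      by_contra hfK
      have hKconv : Convex ℝ K :=
        ((convex_closedBall (0 : G') (M * ‖f‖)).linear_image (T : G' →ₗ[ℝ] F)).closure
      obtain ⟨ψ, u, hu1, hu2⟩ := geometric_hahn_banach_closed_point hKconv isClosed_closure hfK
      have h0K : (0 : F) ∈ K := subset_closure ⟨0, by simp [le_of_lt hM, mul_nonneg hM.le (norm_nonneg f)], by simp⟩
      have hu0 : 0 < u := by have := hu1 0 h0K; simpa using this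
      have hf0 : f ≠ 0 := by rintro rfl; exact hfK h0K
      have hfpos : 0 < ‖f‖ := norm_pos_iff.mpr hf0
      have hMf : 0 < M * ‖f‖ := mul_pos hM hfpos
      have hψT : ‖ψ.comp T‖ ≤ u / (M * ‖f‖) := by
        apply ContinuousLinearMap.opNorm_le_bound _ (le_of_lt (div_pos hu0 hMf))
        intro x
        rcases eq_or_ne x 0 with rfl | hx
        · simp
        have hxpos : 0 < ‖x‖ := norm_pos_iff.mpr hx
        set y : G' := ((M * ‖f‖) / ‖x‖) • x with hydef
        have hy : ‖y‖ = M * ‖f‖ := by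
          have : ‖y‖ = ‖(M * ‖f‖ / ‖x‖ : ℝ)‖ * ‖x‖ := norm_smul _ x
          rw [this, Real.norm_eq_abs, abs_of_pos (div_pos hMf hxpos),
            div_mul_cancel₀ _ (ne_of_gt hxpos)]
        have hyK : T y ∈ K := subset_closure ⟨y, by simp [Metric.mem_closedBall, hy], rfl⟩
        have hyK' : T (-y) ∈ K := subset_closure ⟨-y, by
          simp [Metric.mem_closedBall, hy], rfl⟩
        have h1 : ψ (T y) ≤ u := le_of_lt (hu1 _ hyK)
        have h2 : -ψ (T y) ≤ u := by
          have := hu1 _ hyK'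
          simpa using le_of_lt this
        have h3 : |ψ (T y)| ≤ u := abs_le.mpr ⟨by linarith, h1⟩
        have h4 : ψ (T y) = ((M * ‖f‖) / ‖x‖) * ψ (T x) := by
          rw [hydef, map_smul, map_smul]; rfl
        have h5 : ψ (T x) = (‖x‖ / (M * ‖f‖)) * ψ (T y) := by
          have hone : ‖x‖ / (M * ‖f‖) * (M * ‖f‖ / ‖x‖) = 1 := by
            rw [div_mul_div_comm, mul_comm]
            exact div_self (ne_of_gt (mul_pos hMf hxpos))
          rw [h4, ← mul_assoc, hone, one_mul]
        calc ‖(ψ.comp T) x‖ = |ψ (T x)| := rfl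
        _ = (‖x‖ / (M * ‖f‖)) * |ψ (T y)| := by
            rw [h5, abs_mul, abs_of_pos (div_pos hxpos hMf)]
        _ ≤ (‖x‖ / (M * ‖f‖)) * u := by
            exact mul_le_mul_of_nonneg_left h3 (le_of_lt (div_pos hxpos hMf))
        _ = u / (M * ‖f‖) * ‖x‖ := by ring
      have hcontra : ψ f ≤ u := by
        have h6 : |ψ f| ≤ M * ‖ψ.comp T‖ * ‖f‖ := key ψ f hf
        have h7 : M * ‖ψ.comp T‖ * ‖f‖ ≤ M * (u / (M * ‖f‖)) * ‖f‖ := by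
          refine mul_le_mul_of_nonneg_right (mul_le_mul_of_nonneg_left hψT hM.le) (norm_nonneg f)
        have h8 : M * (u / (M * ‖f‖)) * ‖f‖ = u := by field_simp
        calc ψ f ≤ |ψ f| := le_abs_self _
        _ ≤ M * (u / (M * ‖f‖)) * ‖f‖ := h6.trans h7
        _ = u := h8
      linarith [hu2]
    -- extract an approximate preimage from closure membership
    rw [hKdef, Metric.mem_closure_iff] at hfK
    obtain ⟨b, hb, hbd⟩ := hfK δ hδ
    obtain ⟨x, hxball, hxb⟩ := hb
    refine ⟨x, ?_, ?_⟩
    · simpa [Metric.mem_closedBall, dist_zero_right] using hxball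
    · rw [← hxb] at hbd
      rw [← dist_eq_norm]
      exact le_of_lt (dist_comm f (T x) ▸ hbd)
  -- conclude via completeness
  have hexact := exact_of_approx T Z hTZ M hM happrox
  refine ⟨2 * M, by positivity, ?_⟩
  intro f hfr
  obtain ⟨x, hTx, hxnorm⟩ := hexact f (Submodule.le_topologicalClosure _ hfr)
  obtain ⟨e, he⟩ := x.prop
  have he1 : ((e : E), A e) = x.val := he
  refine ⟨e, ?_, ?_⟩
  · rw [← hTx]; exact congrArg Prod.snd he1
  · calc ‖(e : E)‖ = ‖x.val.1‖ := by rw [← he1]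
    _ ≤ ‖x.val‖ := norm_fst_le x.val
    _ = ‖x‖ := rfl
    _ ≤ 2 * M * ‖f‖ := hxnorm


/-- Let `A : D(A) ⊆ E → F` be a closed densely defined operator between
real Banach spaces, with adjoint `A* : D(A*) ⊆ F* → E*`.  Then the image `A*(D(A*))` is
closed in `E*` iff there is `C > 0` such that every `f ∈ A(D(A))` has a preimage
`e ∈ D(A)` with `A e = f` and `‖e‖ ≤ C ‖f‖`. -/
theorem adjoint_closed_range_iff_bounded_solvability
    [CompleteSpace E] [CompleteSpace F]
    (D : Submodule ℝ E) (hD : Dense (D : Set E))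
    (A : D →ₗ[ℝ] F)
    (hclosed : IsClosed {p : E × F | ∃ e : D, (e : E) = p.1 ∧ A e = p.2}) :
    IsClosed {g : E →L[ℝ] ℝ | ∃ fstar : F →L[ℝ] ℝ, IsAdjointPair D A fstar g} ↔
      ∃ C : ℝ, 0 < C ∧ ∀ f ∈ Set.range A, ∃ e : D, A e = f ∧ ‖(e : E)‖ ≤ C * ‖f‖ :=
  ⟨fun hS => fwd_dir D A hclosed hS, fun ⟨C, _, hsolv⟩ => rev_dir D A C hsolv⟩

end Stmt3
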